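/- arXiv:1512.08476 — 2 statements merged into one kernel-verified Lean document; each statement's English description precedes it below -/
import Mathlib

section
/- Let T be a bounded linear operator on L² induced by a K⁰-kernel 𝐓 satisfying condition (iv), let {βₙ} be a complex sequence with βₙ → 0, and set λₙ(λ) = λ(1 − βₙλ)⁻¹. Then for every compact subset K̃ of ∇_s({βₙI + T̃ₙ}) and each fixed point (s,t) ∈ ℝ², sup_{λ∈K̃} |𝐓_{n|λₙ(λ)}(s,t) − 𝐓_{|λ}(s,t)| → 0 as n → ∞ (the quantity being defined for all sufficiently large n). -/
open MeasureTheory Filter Topology ContinuousLinearMap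
open scoped ENNReal NNReal

noncomputable section

/-- `L²(ℝ)`, the complex Hilbert space of square-integrable functions on `ℝ`. -/
abbrev L2 : Type := MeasureTheory.Lp ℂ 2 (MeasureTheory.volume : MeasureTheory.Measure ℝ)

/-- Bounded linear operators on `L²`. -/
abbrev L2op : Type := L2 →L[ℂ] L2

/-- `T` is the integral operator induced by the kernel `K`:
`(Tf)(s) = ∫ K(s,t) f(t) dt` for every `f ∈ L²` and almost every `s`. -/
def IsInducedBy (T : L2op) (K : ℝ → ℝ → ℂ) : Prop :=
  ∀ f : L2, ∀ᵐ s : ℝ, (T f : ℝ → ℂ) s = ∫ t : ℝ, K s t * (f : ℝ → ℂ) t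

/-- `K` is a `K⁰`-kernel with associated Carleman functions `kt`, `kt'`:
`kt s = conj (K s ·)` and `kt' s = K · s` as elements of `L²`, the kernel is
continuous and vanishes at infinity, and both Carleman functions are continuous
and vanish at infinity in `L²`-norm. -/
structure IsK0Kernel (K : ℝ → ℝ → ℂ) (kt kt' : ℝ → L2) : Prop where
  repr_t : ∀ s : ℝ, (kt s : ℝ → ℂ) =ᵐ[volume] fun x => (starRingEnd ℂ) (K s x)
  repr_t' : ∀ s : ℝ, (kt' s : ℝ → ℂ) =ᵐ[volume] fun x => K x s
  cont : Continuous fun p : ℝ × ℝ => K p.1 p.2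
  vanish : Tendsto (fun p : ℝ × ℝ => K p.1 p.2) (cocompact (ℝ × ℝ)) (𝓝 0)
  cont_t : Continuous kt
  vanish_t : Tendsto kt (cocompact ℝ) (𝓝 0)
  cont_t' : Continuous kt'
  vanish_t' : Tendsto kt' (cocompact ℝ) (𝓝 0)

/-- The set `Π(T)` of regular values of `T`: those `λ` for which `I - λT` is invertible. -/
def regularSet (T : L2op) : Set ℂ := {lam : ℂ | IsUnit (1 - lam • T)}

/-- The resolvent `R_λ(T) = (I - λT)⁻¹` (junk value `0` if `λ ∉ Π(T)`). -/
def res (T : L2op) (lam : ℂ) : L2op := Ring.inverse (1 - lam • T)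

/-- The Fredholm resolvent `T_{|λ} = T R_λ(T)`. -/
def fres (T : L2op) (lam : ℂ) : L2op := T * res T lam

/-- The region of boundedness `∇_b({Sₙ})`. -/
def nablaB (S : ℕ → L2op) : Set ℂ :=
  {ζ : ℂ | ζ ≠ 0 ∧ ∃ M : ℝ, 0 < M ∧ ∃ N : ℕ, ∀ n > N,
      ζ ∈ regularSet (S n) ∧ ‖fres (S n) ζ‖ ≤ M}

/-- The region of strong convergence `∇_s({Sₙ})`: the `ζ ∈ ∇_b({Sₙ})` such that
the Fredholm resolvents `S_{n|ζ}` converge in the strong operator topology. -/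
def nablaS (S : ℕ → L2op) : Set ℂ :=
  {ζ : ℂ | ζ ∈ nablaB S ∧
    ∀ f : L2, ∃ g : L2, Tendsto (fun n => fres (S n) ζ f) atTop (𝓝 g)}

/-- Nuclear (trace class) operator on `L²`. -/
def IsNuclear (T : L2op) : Prop :=
  ∃ g h : ℕ → L2, Summable (fun k => ‖g k‖ * ‖h k‖) ∧
    ∀ f : L2, T f = ∑' k : ℕ, (inner ℂ f (g k) : ℂ) • h k

/-- The characteristic function `χ` of the interval `(-τ, τ)`, with complex values. -/
def chi (t : ℝ) (x : ℝ) : ℂ := Set.indicator (Set.Ioo (-t) t) 1 x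

/-- Condition (iv) for a `K⁰`-kernel `K` inducing `T`: the positive reals `τ n`
strictly increase to `+∞`, `P n` is the orthogonal projection given by multiplication
by `χₙ = chi (τ n)`, the subkernels `Kₙ(s,t) = χₙ(s)K(s,t)` and
`K̃ₙ(s,t) = χₙ(s)K(s,t)χₙ(t)` are `K⁰`-kernels, and the induced operators
`Tₙ = PₙT` and `T̃ₙ = PₙTPₙ` are nuclear. -/
structure ConditionIV (K : ℝ → ℝ → ℂ) (T : L2op) (tau : ℕ → ℝ) (P : ℕ → L2op) : Prop where
  pos : ∀ n, 0 < tau n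
  mono : StrictMono tau
  tendsto_top : Tendsto tau atTop atTop
  proj : ∀ n, ∀ f : L2, (P n f : ℝ → ℂ) =ᵐ[volume] fun x => chi (tau n) x * (f : ℝ → ℂ) x
  subker : ∀ n, ∃ kt kt' : ℝ → L2, IsK0Kernel (fun s t => chi (tau n) s * K s t) kt kt'
  subker' : ∀ n, ∃ kt kt' : ℝ → L2,
      IsK0Kernel (fun s t => chi (tau n) s * K s t * chi (tau n) t) kt kt'
  nuclear : ∀ n, IsNuclear (P n * T)
  nuclear' : ∀ n, IsNuclear (P n * T * P n)

/-- `λₙ(λ) = λ(1 - βₙλ)⁻¹`. -/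
def lamn (b : ℕ → ℂ) (lam : ℂ) (n : ℕ) : ℂ := lam * (1 - b n * lam)⁻¹

/-- The resolvent kernel for `K` at `λ` built from the resolvent Carleman function
`𝐭'_{|λ}(t) = R_λ(T)(kt' t)`:  `𝐓_{|λ}(s,t) = λ⟨𝐭'_{|λ}(t), 𝐭(s)⟩ + 𝐓(s,t)`
(the paper's inner product `⟨a,b⟩ = ∫ a conj b` is `inner b a` in Mathlib). -/
def resKer (T : L2op) (K : ℝ → ℝ → ℂ) (kt kt' : ℝ → L2) (lam : ℂ) (s t : ℝ) : ℂ :=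
  lam * (inner ℂ (kt s) (res T lam (kt' t)) : ℂ) + K s t

/-- The resolvent kernel for the subkernel `Kₙ` at `λ`:
`𝐓_{n|λ}(s,t) = λ χₙ(s) ⟨𝐭'_{n|λ}(t), 𝐭(s)⟩ + 𝐓ₙ(s,t)`, where
`𝐭'_{n|λ}(t) = R_λ(Tₙ) Pₙ (kt' t)` and `𝐓ₙ(s,t) = χₙ(s) 𝐓(s,t)`. -/
def resKerN (T : L2op) (K : ℝ → ℝ → ℂ) (kt kt' : ℝ → L2) (taun : ℝ) (Pn : L2op)
    (lam : ℂ) (s t : ℝ) : ℂ :=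
  lam * chi taun s * (inner ℂ (kt s) (res (Pn * T) lam (Pn (kt' t))) : ℂ) + chi taun s * K s t

/-- `R` is a resolvent kernel for the `K⁰`-kernel `K` at `λ` (Definition 2 of the paper):
`R` is a `K⁰`-kernel satisfying the two simultaneous integral equations and the
square-integrability condition. -/
def IsResolventKernel (K : ℝ → ℝ → ℂ) (lam : ℂ) (R : ℝ → ℝ → ℂ) : Prop :=
  (∃ rt rt' : ℝ → L2, IsK0Kernel R rt rt') ∧
  (∀ s t : ℝ, R s t - lam * ∫ x : ℝ, K s x * R x t = K s t) ∧
  (∀ s t : ℝ, R s t - lam * ∫ x : ℝ, R s x * K x t = K s t) ∧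
  (∀ f : L2, ∫⁻ s : ℝ, ((‖∫ t : ℝ, R s t * (f : ℝ → ℂ) t‖₊ : ℝ≥0) : ℝ≥0∞) ^ 2 < ⊤)

/-! ### Auxiliary ring/resolvent lemmas -/

lemma aux_isUnit {M₀ : Type*} [MonoidWithZero M₀] {x y : M₀} (h1 : x * y = 1) (h2 : y * x = 1) :
    IsUnit x := ⟨⟨x, y, h1, h2⟩, rfl⟩

lemma aux_ringInverse_eq {M₀ : Type*} [MonoidWithZero M₀] {x y : M₀} (h1 : x * y = 1)
    (h2 : y * x = 1) : Ring.inverse x = y := by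
  have := Ring.inverse_unit ⟨x, y, h1, h2⟩
  simpa using this

lemma aux_unit_swap {R : Type*} [Ring R] {x y : R} (h : IsUnit (1 - x * y)) :
    IsUnit (1 - y * x) := by
  refine ⟨⟨1 - y * x, 1 + y * h.unit.inv * x, ?_, ?_⟩, rfl⟩
  · calc
      (1 - y * x) * (1 + y * (IsUnit.unit h).inv * x) =
          1 - y * x + y * ((1 - x * y) * h.unit.inv) * x := by noncomm_ring
      _ = 1 := by simp only [Units.inv_eq_val_inv, IsUnit.mul_val_inv, mul_one, sub_add_cancel]
  · calc
      (1 + y * (IsUnit.unit h).inv * x) * (1 - y * x) =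
          1 - y * x + y * (h.unit.inv * (1 - x * y)) * x := by noncomm_ring
      _ = 1 := by simp only [Units.inv_eq_val_inv, IsUnit.val_inv_mul, mul_one, sub_add_cancel]

lemma res_right {T : L2op} {z : ℂ} (h : IsUnit (1 - z • T)) :
    (1 - z • T) * res T z = 1 := Ring.mul_inverse_cancel _ h

lemma res_left {T : L2op} {z : ℂ} (h : IsUnit (1 - z • T)) :
    res T z * (1 - z • T) = 1 := Ring.inverse_mul_cancel _ h

lemma res_eq {T : L2op} {z : ℂ} (h : IsUnit (1 - z • T)) :
    res T z = 1 + z • fres T z := by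
  have h1 := res_right h
  rw [sub_mul, one_mul, smul_mul_assoc] at h1
  have := sub_eq_iff_eq_add'.mp h1
  simpa [fres, add_comm] using this

lemma res_apply {T : L2op} {z : ℂ} (h : IsUnit (1 - z • T)) (f : L2) :
    res T z f = f + z • fres T z f := by
  rw [res_eq h]
  simp [ContinuousLinearMap.add_apply, ContinuousLinearMap.smul_apply]

lemma res_sub {S : L2op} {l m : ℂ} (hl : IsUnit (1 - l • S)) (hm : IsUnit (1 - m • S)) :
    res S l - res S m = (l - m) • (res S l * fres S m) := by
  have h1 : res S l * ((1 - m • S) * res S m) = res S l := by rw [res_right hm, mul_one]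
  have h2 : res S l * (1 - l • S) * res S m = res S m := by rw [res_left hl, one_mul]
  calc res S l - res S m
      = res S l * ((1 - m • S) * res S m) - res S l * (1 - l • S) * res S m := by rw [h1, h2]
    _ = res S l * (((1 - m • S) - (1 - l • S)) * res S m) := by noncomm_ring
    _ = res S l * (((l - m) • S) * res S m) := by
        congr 1
        rw [sub_sub_sub_cancel_left, ← sub_smul]
    _ = (l - m) • (res S l * fres S m) := by
        rw [fres, smul_mul_assoc, mul_smul_comm]

lemma aux_norm_one_le : ‖(1 : L2op)‖ ≤ 1 := by
  rw [ContinuousLinearMap.one_def]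
  exact ContinuousLinearMap.norm_id_le

lemma aux_inv_one_sub_bound {t : L2op} (h : ‖t‖ ≤ 1 / 2) :
    IsUnit (1 - t) ∧ ‖Ring.inverse (1 - t)‖ ≤ 2 := by
  have hu : IsUnit (1 - t) := isUnit_one_sub_of_norm_lt_one (lt_of_le_of_lt h (by norm_num))
  refine ⟨hu, ?_⟩
  set v := Ring.inverse (1 - t) with hv
  have h1 : (1 - t) * v = 1 := Ring.mul_inverse_cancel _ hu
  have h2 : v = 1 + t * v := by
    rw [sub_mul, one_mul] at h1
    exact sub_eq_iff_eq_add.mp h1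
  have hb : ‖v‖ ≤ 1 + 1 / 2 * ‖v‖ := by
    calc ‖v‖ = ‖1 + t * v‖ := by rw [← h2]
      _ ≤ ‖(1 : L2op)‖ + ‖t * v‖ := norm_add_le _ _
      _ ≤ 1 + ‖t‖ * ‖v‖ := add_le_add aux_norm_one_le (norm_mul_le _ _)
      _ ≤ 1 + 1 / 2 * ‖v‖ := by
          have : ‖t‖ * ‖v‖ ≤ 1 / 2 * ‖v‖ := mul_le_mul_of_nonneg_right h (norm_nonneg _)
          linarith
  linarith

lemma pert {S : L2op} {z z' : ℂ} {M : ℝ} (hz : IsUnit (1 - z • S)) (hM : ‖fres S z‖ ≤ M)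
    (hd : ‖z' - z‖ * M ≤ 1 / 2) : IsUnit (1 - z' • S) ∧ ‖fres S z'‖ ≤ 2 * M := by
  set t : L2op := (z' - z) • fres S z with ht
  have htn : ‖t‖ ≤ 1 / 2 := by
    have hts : ‖t‖ = ‖z' - z‖ * ‖fres S z‖ := by rw [ht]; exact norm_smul (z' - z) (fres S z)
    rw [hts]
    calc ‖z' - z‖ * ‖fres S z‖ ≤ ‖z' - z‖ * M :=
          mul_le_mul_of_nonneg_left hM (norm_nonneg _)
      _ ≤ 1 / 2 := hd
  obtain ⟨hu1, hb1⟩ := aux_inv_one_sub_bound htn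
  have hfact : (1 - t) * (1 - z • S) = 1 - z' • S := by
    have hl : t * (1 - z • S) = (z' - z) • S := by
      rw [ht, fres, smul_mul_assoc, mul_assoc, res_left hz, mul_one]
    rw [sub_mul, one_mul, hl, sub_sub, ← add_smul]
    ring_nf
  have hu2 : IsUnit (1 - z' • S) := by rw [← hfact]; exact hu1.mul hz
  have hres : res S z' = res S z * Ring.inverse (1 - t) := by
    refine aux_ringInverse_eq ?_ ?_
    · rw [← hfact, mul_assoc, ← mul_assoc (1 - z • S), res_right hz, one_mul,
        Ring.mul_inverse_cancel _ hu1]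
    · rw [← hfact, mul_assoc, ← mul_assoc (Ring.inverse (1 - t)), Ring.inverse_mul_cancel _ hu1,
        one_mul, res_left hz]
  refine ⟨hu2, ?_⟩
  have hM0 : 0 ≤ M := le_trans (norm_nonneg _) hM
  calc ‖fres S z'‖ = ‖fres S z * Ring.inverse (1 - t)‖ := by rw [fres, hres, ← mul_assoc, ← fres]
    _ ≤ ‖fres S z‖ * ‖Ring.inverse (1 - t)‖ := norm_mul_le _ _
    _ ≤ M * 2 := mul_le_mul hM hb1 (norm_nonneg _) hM0
    _ = 2 * M := by ring

/-! ### chi and projection lemmas -/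

lemma chi_norm_le (t x : ℝ) : ‖chi t x‖ ≤ 1 := by
  unfold chi
  by_cases h : x ∈ Set.Ioo (-t) t <;> simp [Set.indicator_apply, h]

lemma chi_eq_one {t x : ℝ} (h : |x| < t) : chi t x = 1 := by
  have hx : x ∈ Set.Ioo (-t) t := ⟨neg_lt_of_abs_lt h, lt_of_abs_lt h⟩
  simp [chi, Set.indicator_apply, hx]

lemma chi_mul_self (t x : ℝ) : chi t x * chi t x = chi t x := by
  by_cases h : x ∈ Set.Ioo (-t) t <;> simp [chi, Set.indicator_apply, h]

lemma Pn_norm_le {Pn : L2op} {τ : ℝ}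
    (hproj : ∀ f : L2, (Pn f : ℝ → ℂ) =ᵐ[volume] fun x => chi τ x * (f : ℝ → ℂ) x)
    (f : L2) : ‖Pn f‖ ≤ ‖f‖ := by
  rw [Lp.norm_def, Lp.norm_def]
  have h1 : eLpNorm (Pn f : ℝ → ℂ) 2 volume
      = eLpNorm (fun x => chi τ x * (f : ℝ → ℂ) x) 2 volume := eLpNorm_congr_ae (hproj f)
  have h2 : eLpNorm (fun x => chi τ x * (f : ℝ → ℂ) x) 2 volume
      ≤ eLpNorm (f : ℝ → ℂ) 2 volume := by
    apply eLpNorm_mono_ae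
    filter_upwards with x
    rw [norm_mul]
    calc ‖chi τ x‖ * ‖(f : ℝ → ℂ) x‖ ≤ 1 * ‖(f : ℝ → ℂ) x‖ :=
          mul_le_mul_of_nonneg_right (chi_norm_le τ x) (norm_nonneg _)
      _ = ‖(f : ℝ → ℂ) x‖ := one_mul _
  exact ENNReal.toReal_mono (Lp.eLpNorm_ne_top f) (h1 ▸ h2)

lemma Pn_idem {Pn : L2op} {τ : ℝ}
    (hproj : ∀ f : L2, (Pn f : ℝ → ℂ) =ᵐ[volume] fun x => chi τ x * (f : ℝ → ℂ) x) :
    Pn * Pn = Pn := by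
  ext f
  rw [ContinuousLinearMap.mul_apply]
  filter_upwards [hproj (Pn f), hproj f] with x h1 h2
  rw [h1, h2, ← mul_assoc, chi_mul_self, ← h2]

lemma Pn_tendsto {P : ℕ → L2op} {tau : ℕ → ℝ}
    (hproj : ∀ n, ∀ f : L2, (P n f : ℝ → ℂ) =ᵐ[volume] fun x => chi (tau n) x * (f : ℝ → ℂ) x)
    (htop : Tendsto tau atTop atTop) (f : L2) :
    Tendsto (fun n => P n f) atTop (𝓝 f) := by
  rw [tendsto_iff_norm_sub_tendsto_zero]
  set g : ℕ → ℝ → ℂ := fun n x => (chi (tau n) x - 1) * (f : ℝ → ℂ) x with hg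
  have hI : Tendsto (fun n => ∫⁻ x, (‖g n x‖₊ : ℝ≥0∞) ^ (2 : ℝ)) atTop (𝓝 0) := by
    have hmeas : ∀ n, Measurable fun x => (‖g n x‖₊ : ℝ≥0∞) ^ (2 : ℝ) := by
      intro n
      have hchi : Measurable fun x : ℝ => chi (tau n) x :=
        measurable_const.indicator measurableSet_Ioo
      have hf := (Lp.stronglyMeasurable f).measurable
      exact (((hchi.sub measurable_const).mul hf).nnnorm.coe_nnreal_ennreal).pow_const _
    have h_bound : ∀ n, (fun x => (‖g n x‖₊ : ℝ≥0∞) ^ (2 : ℝ))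
        ≤ᵐ[volume] fun x => (‖(f : ℝ → ℂ) x‖₊ : ℝ≥0∞) ^ (2 : ℝ) := by
      intro n
      filter_upwards with x
      apply ENNReal.rpow_le_rpow _ (by norm_num)
      rw [ENNReal.coe_le_coe]
      have : ‖g n x‖ ≤ ‖(f : ℝ → ℂ) x‖ := by
        rw [hg]
        simp only [norm_mul]
        have h1 : ‖chi (tau n) x - 1‖ ≤ 1 := by
          unfold chi
          by_cases h : x ∈ Set.Ioo (-(tau n)) (tau n) <;> simp [Set.indicator_apply, h]
        calc ‖chi (tau n) x - 1‖ * ‖(f : ℝ → ℂ) x‖ ≤ 1 * ‖(f : ℝ → ℂ) x‖ :=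
              mul_le_mul_of_nonneg_right h1 (norm_nonneg _)
          _ = _ := one_mul _
      exact this
    have h_fin : ∫⁻ x, (‖(f : ℝ → ℂ) x‖₊ : ℝ≥0∞) ^ (2 : ℝ) ∂volume ≠ ⊤ := by
      have h := Lp.eLpNorm_ne_top f
      rw [eLpNorm_eq_lintegral_rpow_enorm_toReal (by norm_num) (by norm_num)] at h
      simp only [enorm_eq_nnnorm] at h
      intro hI'
      rw [show ((2:ℝ≥0∞).toReal) = (2:ℝ) by norm_num] at h
      rw [hI'] at h
      simp [ENNReal.top_rpow_of_pos] at h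
    have h_lim : ∀ᵐ x : ℝ ∂volume,
        Tendsto (fun n => (‖g n x‖₊ : ℝ≥0∞) ^ (2 : ℝ)) atTop (𝓝 ((fun _ : ℝ => (0:ℝ≥0∞)) x)) := by
      filter_upwards with x
      have hev : ∀ᶠ n in atTop, |x| < tau n := htop.eventually_gt_atTop |x|
      apply tendsto_const_nhds.congr'
      filter_upwards [hev] with n hn
      rw [hg]
      simp [chi_eq_one hn, ENNReal.zero_rpow_of_pos]
    have := tendsto_lintegral_of_dominated_convergence _ hmeas h_bound h_fin h_lim
    simpa using this
  have key : Tendsto (fun n => eLpNorm (g n) 2 volume) atTop (𝓝 0) := by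
    have hrw : ∀ n, eLpNorm (g n) 2 volume
        = (∫⁻ x, (‖g n x‖₊ : ℝ≥0∞) ^ (2 : ℝ)) ^ (1 / (2:ℝ)) := by
      intro n
      rw [eLpNorm_eq_lintegral_rpow_enorm_toReal (by norm_num) (by norm_num)]
      simp only [enorm_eq_nnnorm]
      norm_num
    have h2 : Tendsto (fun n => (∫⁻ x, (‖g n x‖₊ : ℝ≥0∞) ^ (2 : ℝ)) ^ (1 / (2:ℝ)))
        atTop (𝓝 ((0 : ℝ≥0∞) ^ (1 / (2:ℝ)))) :=
      (ENNReal.continuous_rpow_const.tendsto 0).comp hI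
    rw [ENNReal.zero_rpow_of_pos (by norm_num)] at h2
    exact Tendsto.congr (fun n => (hrw n).symm) h2
  have heq : ∀ n, ‖P n f - f‖ = (eLpNorm (g n) 2 volume).toReal := by
    intro n
    rw [Lp.norm_def]
    congr 1
    apply eLpNorm_congr_ae
    filter_upwards [Lp.coeFn_sub (P n f) f, hproj n f] with x h1 h2
    rw [h1]
    simp only [Pi.sub_apply]
    rw [h2, hg]
    ring
  have := (ENNReal.tendsto_toReal (by norm_num : (0:ℝ≥0∞) ≠ ⊤)).comp key
  simp only [ENNReal.toReal_zero] at this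
  exact Tendsto.congr (fun n => (heq n).symm) this

/-! ### Strong resolvent convergence -/

set_option maxHeartbeats 1000000 in
lemma stepB {S : ℕ → L2op} {T : L2op} {z : ℂ} {M C : ℝ}
    (hC : ∀ n (f : L2), ‖S n f‖ ≤ C * ‖f‖)
    (hS : ∀ f : L2, Tendsto (fun n => S n f) atTop (𝓝 (T f)))
    (hreg : ∀ᶠ n in atTop, IsUnit (1 - z • S n) ∧ ‖fres (S n) z‖ ≤ M)
    (hconv : ∀ f : L2, ∃ g, Tendsto (fun n => fres (S n) z f) atTop (𝓝 g)) :
    IsUnit (1 - z • T) ∧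
      (∀ f : L2, Tendsto (fun n => fres (S n) z f) atTop (𝓝 (fres T z f))) := by
  classical
  have hM0 : 0 ≤ M := by
    obtain ⟨n, hn⟩ := hreg.exists
    exact le_trans (norm_nonneg _) hn.2
  set C' : ℝ := max C 0 with hC'
  have hC'' : ∀ n (f : L2), ‖S n f‖ ≤ C' * ‖f‖ := fun n f =>
    le_trans (hC n f) (mul_le_mul_of_nonneg_right (le_max_left _ _) (norm_nonneg _))
  set g : L2 → L2 := fun f => (hconv f).choose with hgdef
  have hg : ∀ f, Tendsto (fun n => fres (S n) z f) atTop (𝓝 (g f)) := fun f =>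
    (hconv f).choose_spec
  have hgbound : ∀ f, ‖g f‖ ≤ M * ‖f‖ := by
    intro f
    apply le_of_tendsto (hg f).norm
    filter_upwards [hreg] with n hn
    exact le_trans ((fres (S n) z).le_opNorm f) (mul_le_mul_of_nonneg_right hn.2 (norm_nonneg _))
  have hRt : ∀ f : L2, Tendsto (fun n => res (S n) z f) atTop (𝓝 (f + z • g f)) := by
    intro f
    apply Tendsto.congr' _ (tendsto_const_nhds.add ((hg f).const_smul z))
    filter_upwards [hreg] with n hn
    exact (res_apply hn.1 f).symm
  have hadd : ∀ f f' : L2, (f + f') + z • g (f + f') = (f + z • g f) + (f' + z • g f') := by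
    intro f f'
    refine tendsto_nhds_unique (hRt (f + f')) ?_
    have : (fun n => res (S n) z (f + f')) = fun n => res (S n) z f + res (S n) z f' := by
      funext n; exact map_add _ f f'
    rw [this]
    exact (hRt f).add (hRt f')
  have hsmul : ∀ (c : ℂ) (f : L2), (c • f) + z • g (c • f) = c • (f + z • g f) := by
    intro c f
    refine tendsto_nhds_unique (hRt (c • f)) ?_
    have : (fun n => res (S n) z (c • f)) = fun n => c • res (S n) z f := by
      funext n; exact map_smul _ c f
    rw [this]
    exact (hRt f).const_smul c
  set Φlin : L2 →ₗ[ℂ] L2 :=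
    { toFun := fun f => f + z • g f
      map_add' := hadd
      map_smul' := hsmul } with hΦlin
  have hΦbound : ∀ f : L2, ‖Φlin f‖ ≤ (1 + ‖z‖ * M) * ‖f‖ := by
    intro f
    calc ‖f + z • g f‖ ≤ ‖f‖ + ‖z • g f‖ := norm_add_le _ _
      _ ≤ ‖f‖ + ‖z‖ * (M * ‖f‖) := by
          rw [norm_smul]
          exact add_le_add_right (mul_le_mul_of_nonneg_left (hgbound f) (norm_nonneg _)) _
      _ = (1 + ‖z‖ * M) * ‖f‖ := by ring
  set Φ : L2op := LinearMap.mkContinuous Φlin (1 + ‖z‖ * M) hΦbound with hΦ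
  have hΦapply : ∀ f : L2, Φ f = f + z • g f := fun f => rfl
  -- S n (res (S n) z f) tends to T (Φ f)
  have hSR : ∀ f : L2, Tendsto (fun n => S n (res (S n) z f)) atTop (𝓝 (T (Φ f))) := by
    intro f
    rw [tendsto_iff_norm_sub_tendsto_zero]
    have hb : ∀ n, ‖S n (res (S n) z f) - T (Φ f)‖
        ≤ C' * ‖res (S n) z f - Φ f‖ + ‖S n (Φ f) - T (Φ f)‖ := by
      intro n
      calc ‖S n (res (S n) z f) - T (Φ f)‖
          = ‖S n (res (S n) z f - Φ f) + (S n (Φ f) - T (Φ f))‖ := by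
            congr 1; rw [map_sub]; abel
        _ ≤ ‖S n (res (S n) z f - Φ f)‖ + ‖S n (Φ f) - T (Φ f)‖ := norm_add_le _ _
        _ ≤ C' * ‖res (S n) z f - Φ f‖ + ‖S n (Φ f) - T (Φ f)‖ :=
            add_le_add_left (hC'' n _) _
    have hb0 : Tendsto (fun n => C' * ‖res (S n) z f - Φ f‖ + ‖S n (Φ f) - T (Φ f)‖)
        atTop (𝓝 0) := by
      have h1 : Tendsto (fun n => ‖res (S n) z f - Φ f‖) atTop (𝓝 0) := by
        rw [← tendsto_iff_norm_sub_tendsto_zero]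
        rw [hΦapply]; exact hRt f
      have h2 : Tendsto (fun n => ‖S n (Φ f) - T (Φ f)‖) atTop (𝓝 0) := by
        rw [← tendsto_iff_norm_sub_tendsto_zero]; exact hS (Φ f)
      simpa using (h1.const_mul C').add h2
    exact squeeze_zero (fun n => norm_nonneg _) hb hb0
  have hright : (1 - z • T) * Φ = 1 := by
    refine ContinuousLinearMap.ext fun f => ?_
    rw [ContinuousLinearMap.mul_apply, ContinuousLinearMap.one_apply]
    have hexp : (1 - z • T) (Φ f) = Φ f - z • T (Φ f) := by
      simp [ContinuousLinearMap.sub_apply, ContinuousLinearMap.smul_apply,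
        ContinuousLinearMap.one_apply]
    rw [hexp]
    have hlim : Tendsto (fun n => res (S n) z f - z • S n (res (S n) z f))
        atTop (𝓝 (Φ f - z • T (Φ f))) := (hRt f).sub ((hSR f).const_smul z)
    have hev : ∀ᶠ n in atTop, res (S n) z f - z • S n (res (S n) z f) = f := by
      filter_upwards [hreg] with n hn
      have := congrArg (fun (A : L2op) => A f) (res_right hn.1)
      simpa [ContinuousLinearMap.mul_apply, ContinuousLinearMap.sub_apply,
        ContinuousLinearMap.smul_apply, ContinuousLinearMap.one_apply] using this
    have : Tendsto (fun _ : ℕ => f) atTop (𝓝 (Φ f - z • T (Φ f))) :=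
      hlim.congr' (hev.mono fun n hn => hn)
    exact (tendsto_nhds_unique tendsto_const_nhds this).symm
  have hleft : Φ * (1 - z • T) = 1 := by
    refine ContinuousLinearMap.ext fun f => ?_
    rw [ContinuousLinearMap.mul_apply, ContinuousLinearMap.one_apply]
    have h1 : Tendsto (fun n => res (S n) z ((1 - z • T) f)) atTop (𝓝 (Φ ((1 - z • T) f))) := by
      rw [hΦapply]; exact hRt _
    have h2 : Tendsto (fun n => res (S n) z ((1 - z • T) f)) atTop (𝓝 f) := by
      have hev : ∀ᶠ n in atTop,
          res (S n) z ((1 - z • T) f) = f + z • res (S n) z (S n f - T f) := by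
        filter_upwards [hreg] with n hn
        have hsplit : (1 - z • T) f = (1 - z • S n) f + z • (S n f - T f) := by
          simp only [ContinuousLinearMap.sub_apply, ContinuousLinearMap.smul_apply,
            ContinuousLinearMap.one_apply]
          rw [smul_sub]; abel
        rw [hsplit, map_add, ContinuousLinearMap.map_smul]
        congr 1
        have h5 := congrArg (fun (A : L2op) => A f) (res_left hn.1)
        simp only [ContinuousLinearMap.mul_apply, ContinuousLinearMap.one_apply] at h5
        exact h5
      have hz : Tendsto (fun n => f + z • res (S n) z (S n f - T f)) atTop (𝓝 f) := by
        have hzero : Tendsto (fun n => z • res (S n) z (S n f - T f)) atTop (𝓝 0) := by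
          rw [tendsto_zero_iff_norm_tendsto_zero]
          have hbnd : ∀ᶠ n in atTop, ‖z • res (S n) z (S n f - T f)‖
              ≤ ‖z‖ * ((1 + ‖z‖ * M) * ‖S n f - T f‖) := by
            filter_upwards [hreg] with n hn
            rw [norm_smul]
            apply mul_le_mul_of_nonneg_left _ (norm_nonneg z)
            rw [res_apply hn.1]
            calc ‖(S n f - T f) + z • fres (S n) z (S n f - T f)‖
                ≤ ‖S n f - T f‖ + ‖z‖ * ‖fres (S n) z (S n f - T f)‖ := by
                  refine le_trans (norm_add_le _ _) ?_
                  rw [norm_smul]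
              _ ≤ ‖S n f - T f‖ + ‖z‖ * (M * ‖S n f - T f‖) := by
                  refine add_le_add_right (mul_le_mul_of_nonneg_left ?_ (norm_nonneg _)) _
                  exact le_trans ((fres (S n) z).le_opNorm _)
                    (mul_le_mul_of_nonneg_right hn.2 (norm_nonneg _))
              _ = (1 + ‖z‖ * M) * ‖S n f - T f‖ := by ring
          have hzb : Tendsto (fun n => ‖z‖ * ((1 + ‖z‖ * M) * ‖S n f - T f‖)) atTop (𝓝 0) := by
            have : Tendsto (fun n => ‖S n f - T f‖) atTop (𝓝 0) := by
              rw [← tendsto_iff_norm_sub_tendsto_zero]; exact hS f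
            simpa using (this.const_mul (1 + ‖z‖ * M)).const_mul ‖z‖
          exact squeeze_zero' (Eventually.of_forall fun n => norm_nonneg _) hbnd hzb
        have h0 := (tendsto_const_nhds (x := f)).add hzero
        rw [add_zero] at h0
        exact h0
      exact hz.congr' (hev.mono fun n hn => hn.symm)
    exact tendsto_nhds_unique h1 h2
  have hunit : IsUnit (1 - z • T) := aux_isUnit hright hleft
  have hresT : res T z = Φ := aux_ringInverse_eq hright hleft
  refine ⟨hunit, fun f => ?_⟩
  have : fres T z f = T (Φ f) := by rw [fres, hresT, ContinuousLinearMap.mul_apply]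
  rw [this]
  apply (hSR f).congr
  intro n
  rw [fres, ContinuousLinearMap.mul_apply]

/-! ### Uniformity over compact sets -/

lemma unifBound {S : ℕ → L2op} {Kc : Set ℂ} (hKc : IsCompact Kc)
    (hsub : ∀ z ∈ Kc, ∃ M : ℝ, 0 < M ∧ ∃ N : ℕ, ∀ n > N,
      IsUnit (1 - z • S n) ∧ ‖fres (S n) z‖ ≤ M) :
    ∃ M : ℝ, 0 < M ∧ ∀ᶠ n in atTop, ∀ z ∈ Kc,
      IsUnit (1 - z • S n) ∧ ‖fres (S n) z‖ ≤ M := by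
  classical
  set Mf : ℂ → ℝ := fun z => if h : z ∈ Kc then (hsub z h).choose else 1 with hMf
  have hMfpos : ∀ z, 0 < Mf z := by
    intro z
    rw [hMf]
    by_cases h : z ∈ Kc
    · simp only [h, dif_pos]
      exact (hsub z h).choose_spec.1
    · simp [h]
  set Nf : ℂ → ℕ := fun z => if h : z ∈ Kc then (hsub z h).choose_spec.2.choose else 0 with hNf
  have hMN : ∀ z (hz : z ∈ Kc), ∀ n > Nf z, IsUnit (1 - z • S n) ∧ ‖fres (S n) z‖ ≤ Mf z := by
    intro z hz n hn
    have hNz : Nf z = (hsub z hz).choose_spec.2.choose := dif_pos hz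
    have hMz : Mf z = (hsub z hz).choose := dif_pos hz
    rw [hNz] at hn
    rw [hMz]
    exact (hsub z hz).choose_spec.2.choose_spec n hn
  obtain ⟨tset, htsub, htcover⟩ := hKc.elim_nhds_subcover
    (fun z => Metric.ball z ((1 / 2) / Mf z))
    (fun z _ => Metric.ball_mem_nhds z (div_pos one_half_pos (hMfpos z)))
  have hsumpos : (0:ℝ) ≤ ∑ w ∈ tset, 2 * Mf w :=
    Finset.sum_nonneg fun i _ => by have := hMfpos i; linarith
  refine ⟨1 + ∑ w ∈ tset, 2 * Mf w, by linarith, ?_⟩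
  filter_upwards [eventually_gt_atTop (tset.sup Nf)] with n hn z hz
  obtain ⟨w, hwt, hball⟩ := Set.mem_iUnion₂.mp (htcover hz)
  have hwK := htsub w hwt
  have hnw : n > Nf w := lt_of_le_of_lt (Finset.le_sup hwt) hn
  obtain ⟨hu, hb⟩ := hMN w hwK n hnw
  have hd : ‖z - w‖ * Mf w ≤ 1 / 2 := by
    rw [Metric.mem_ball, dist_eq_norm] at hball
    have := (lt_div_iff₀ (hMfpos w)).mp hball
    linarith
  obtain ⟨hu', hb'⟩ := pert hu hb hd
  refine ⟨hu', le_trans hb' ?_⟩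
  have hsum : 2 * Mf w ≤ ∑ w ∈ tset, 2 * Mf w :=
    Finset.single_le_sum (f := fun w => 2 * Mf w)
      (fun i _ => by have := hMfpos i; show (0:ℝ) ≤ 2 * Mf i; linarith) hwt
  linarith

lemma unifConv {Kc : Set ℂ} (hKc : IsCompact Kc) {h : ℂ → L2} {hn : ℕ → ℂ → L2} {L : ℝ}
    (hL0 : 0 ≤ L)
    (hLipn : ∀ᶠ n in atTop, ∀ l ∈ Kc, ∀ m ∈ Kc, ‖hn n l - hn n m‖ ≤ L * ‖l - m‖)
    (hLip : ∀ l ∈ Kc, ∀ m ∈ Kc, ‖h l - h m‖ ≤ L * ‖l - m‖)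
    (hpt : ∀ m ∈ Kc, Tendsto (fun n => hn n m) atTop (𝓝 (h m)))
    {ε : ℝ} (hε : 0 < ε) : ∀ᶠ n in atTop, ∀ l ∈ Kc, ‖hn n l - h l‖ ≤ ε := by
  classical
  set δ : ℝ := ε / (3 * (L + 1)) with hδ
  have hδpos : 0 < δ := by positivity
  have hLδ : L * δ ≤ ε / 3 := by
    have h1 : (L + 1) * δ = ε / 3 := by
      rw [hδ]; field_simp
    nlinarith
  obtain ⟨tset, htsub, htcover⟩ := hKc.elim_nhds_subcover (fun m => Metric.ball m δ)
    (fun m _ => Metric.ball_mem_nhds m hδpos)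
  have hev : ∀ᶠ n in atTop, ∀ m ∈ tset, ‖hn n m - h m‖ ≤ ε / 3 := by
    rw [Filter.eventually_all_finset]
    intro m hm
    have ht := hpt m (htsub m hm)
    have := ht (Metric.ball_mem_nhds (h m) (show (0:ℝ) < ε / 3 by positivity))
    filter_upwards [this] with n hn
    rw [Set.mem_preimage, Metric.mem_ball, dist_eq_norm] at hn
    exact le_of_lt hn
  filter_upwards [hLipn, hev] with n h1 h2 l hl
  obtain ⟨m, hmt, hball⟩ := Set.mem_iUnion₂.mp (htcover hl)
  have hmK := htsub m hmt
  rw [Metric.mem_ball, dist_eq_norm] at hball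
  have d1 : ‖hn n l - hn n m‖ ≤ ε / 3 := by
    refine le_trans (h1 l hl m hmK) (le_trans ?_ hLδ)
    exact mul_le_mul_of_nonneg_left (le_of_lt hball) hL0
  have d3 : ‖h m - h l‖ ≤ ε / 3 := by
    refine le_trans (hLip m hmK l hl) (le_trans ?_ hLδ)
    have : ‖m - l‖ = ‖l - m‖ := by rw [norm_sub_rev]
    rw [this]
    exact mul_le_mul_of_nonneg_left (le_of_lt hball) hL0
  calc ‖hn n l - h l‖ = ‖(hn n l - hn n m) + (hn n m - h m) + (h m - h l)‖ := by abel_nf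
    _ ≤ ‖(hn n l - hn n m) + (hn n m - h m)‖ + ‖h m - h l‖ := norm_add_le _ _
    _ ≤ ‖hn n l - hn n m‖ + ‖hn n m - h m‖ + ‖h m - h l‖ := by
        refine add_le_add_left (norm_add_le _ _) _
    _ ≤ ε / 3 + ε / 3 + ε / 3 := by
        refine add_le_add (add_le_add d1 (h2 m hmt)) d3
    _ = ε := by ring

set_option maxHeartbeats 2000000 in
theorem statement8 (T : L2op) (K : ℝ → ℝ → ℂ) (kt kt' : ℝ → L2)
    (hK : IsK0Kernel K kt kt') (hT : IsInducedBy T K)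
    (tau : ℕ → ℝ) (P : ℕ → L2op) (hiv : ConditionIV K T tau P)
    (b : ℕ → ℂ) (hb : Tendsto b atTop (𝓝 (0 : ℂ)))
    (Kc : Set ℂ) (hKc : IsCompact Kc) (hKcsub : Kc ⊆ nablaS (fun n => b n • (1 : L2op) + P n * T * P n)) (s t : ℝ) :
    (∀ᶠ n in atTop, ∀ lam ∈ Kc, lamn b lam n ∈ regularSet (P n * T)) ∧
    Tendsto (fun n => ⨆ lam ∈ Kc,
        ‖resKerN T K kt kt' (tau n) (P n) (lamn b lam n) s t
          - resKer T K kt kt' lam s t‖)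
      atTop (𝓝 (0 : ℝ)) := by
  classical
  set S : ℕ → L2op := fun n => b n • (1 : L2op) + P n * T * P n with hSdef
  set v : L2 := kt' t with hv
  have hproj := hiv.proj
  have hPnorm : ∀ n (f : L2), ‖P n f‖ ≤ ‖f‖ := fun n f => Pn_norm_le (hproj n) f
  have hPidem : ∀ n, P n * P n = P n := fun n => Pn_idem (hproj n)
  have hPtend : ∀ f : L2, Tendsto (fun n => P n f) atTop (𝓝 f) :=
    Pn_tendsto hproj hiv.tendsto_top
  have hb0 : Tendsto (fun n => ‖b n‖) atTop (𝓝 0) := by simpa using hb.norm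
  have hSapp : ∀ n (f : L2), S n f = b n • f + P n (T (P n f)) := by
    intro n f
    simp [hSdef, ContinuousLinearMap.add_apply, ContinuousLinearMap.smul_apply,
      ContinuousLinearMap.one_apply, ContinuousLinearMap.mul_apply]
  -- P n (u n) → w when u n → w
  have hPcomp : ∀ (u : ℕ → L2) (w : L2), Tendsto u atTop (𝓝 w) →
      Tendsto (fun n => P n (u n)) atTop (𝓝 w) := by
    intro u w hu
    rw [tendsto_iff_norm_sub_tendsto_zero]
    have hbnd : ∀ n, ‖P n (u n) - w‖ ≤ ‖u n - w‖ + ‖P n w - w‖ := by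
      intro n
      have : P n (u n) - w = P n (u n - w) + (P n w - w) := by rw [map_sub]; abel
      rw [this]
      exact le_trans (norm_add_le _ _) (add_le_add_left (hPnorm n _) _)
    refine squeeze_zero (fun n => norm_nonneg _) hbnd ?_
    have e1 : Tendsto (fun n => ‖u n - w‖) atTop (𝓝 0) := by
      rw [← tendsto_iff_norm_sub_tendsto_zero]; exact hu
    have e2 : Tendsto (fun n => ‖P n w - w‖) atTop (𝓝 0) := by
      rw [← tendsto_iff_norm_sub_tendsto_zero]; exact hPtend w
    simpa using e1.add e2
  have hStend : ∀ f : L2, Tendsto (fun n => S n f) atTop (𝓝 (T f)) := by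
    intro f
    have h1 : Tendsto (fun n => b n • f) atTop (𝓝 0) := by
      have := hb.smul_const f
      simpa using this
    have h2 : Tendsto (fun n => P n (T (P n f))) atTop (𝓝 (T f)) := by
      apply hPcomp
      exact (T.continuous.tendsto _).comp (hPtend f)
    have := h1.add h2
    rw [zero_add] at this
    exact this.congr fun n => (hSapp n f).symm
  obtain ⟨B, hB⟩ : ∃ B : ℝ, ∀ n, ‖b n‖ ≤ B := by
    obtain ⟨B, hB'⟩ := hb0.bddAbove_range
    exact ⟨B, fun n => hB' (Set.mem_range_self n)⟩
  have hCS : ∀ n (f : L2), ‖S n f‖ ≤ (B + ‖T‖) * ‖f‖ := by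
    intro n f
    rw [hSapp]
    calc ‖b n • f + P n (T (P n f))‖ ≤ ‖b n • f‖ + ‖P n (T (P n f))‖ := norm_add_le _ _
      _ ≤ ‖b n‖ * ‖f‖ + ‖T (P n f)‖ := by
          rw [norm_smul]; exact add_le_add_right (hPnorm n _) _
      _ ≤ B * ‖f‖ + ‖T‖ * ‖P n f‖ :=
          add_le_add (mul_le_mul_of_nonneg_right (hB n) (norm_nonneg f)) (T.le_opNorm _)
      _ ≤ B * ‖f‖ + ‖T‖ * ‖f‖ :=
          add_le_add_right (mul_le_mul_of_nonneg_left (hPnorm n _) (norm_nonneg T)) _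
      _ = (B + ‖T‖) * ‖f‖ := by ring
  have hsub : ∀ z ∈ Kc, ∃ M : ℝ, 0 < M ∧ ∃ N : ℕ, ∀ n > N,
      IsUnit (1 - z • S n) ∧ ‖fres (S n) z‖ ≤ M := by
    intro z hz
    obtain ⟨⟨hzne, M, hM, N, hN⟩, _⟩ := hKcsub hz
    exact ⟨M, hM, N, fun n hn => ⟨(hN n hn).1, (hN n hn).2⟩⟩
  obtain ⟨M, hMpos, hUB⟩ := unifBound hKc hsub
  have hstep : ∀ z ∈ Kc, IsUnit (1 - z • T) ∧
      (∀ f, Tendsto (fun n => fres (S n) z f) atTop (𝓝 (fres T z f))) := by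
    intro z hz
    refine stepB (M := M) hCS hStend ?_ (hKcsub hz).2
    filter_upwards [hUB] with n hn
    exact hn z hz
  have hfresT : ∀ z ∈ Kc, ∀ f : L2, ‖fres T z f‖ ≤ M * ‖f‖ := by
    intro z hz f
    apply le_of_tendsto ((hstep z hz).2 f).norm
    filter_upwards [hUB] with n hn
    exact le_trans ((fres (S n) z).le_opNorm f)
      (mul_le_mul_of_nonneg_right (hn z hz).2 (norm_nonneg f))
  obtain ⟨D, hD0, hDb⟩ : ∃ D : ℝ, 0 ≤ D ∧ ∀ z ∈ Kc, ‖z‖ ≤ D := by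
    obtain ⟨r, hr⟩ := hKc.isBounded.subset_closedBall (0 : ℂ)
    refine ⟨max r 0, le_max_right _ _, fun z hz => ?_⟩
    have := hr hz
    rw [Metric.mem_closedBall, dist_zero_right] at this
    exact le_trans this (le_max_left _ _)
  -- pointwise bounds on res applied to vectors
  have hresSbnd : ∀ n, ∀ z ∈ Kc, IsUnit (1 - z • S n) → ‖fres (S n) z‖ ≤ M →
      ∀ w : L2, ‖res (S n) z w‖ ≤ (1 + D * M) * ‖w‖ := by
    intro n z hz hu hM w
    rw [res_apply hu]
    calc ‖w + z • fres (S n) z w‖ ≤ ‖w‖ + ‖z‖ * ‖fres (S n) z w‖ := by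
          refine le_trans (norm_add_le _ _) ?_
          rw [norm_smul]
      _ ≤ ‖w‖ + D * (M * ‖w‖) := by
          refine add_le_add_right ?_ _
          refine mul_le_mul (hDb z hz) (le_trans ((fres (S n) z).le_opNorm w)
            (mul_le_mul_of_nonneg_right hM (norm_nonneg w))) (norm_nonneg _) hD0
      _ = (1 + D * M) * ‖w‖ := by ring
  have hresTbnd : ∀ z ∈ Kc, ∀ w : L2, ‖res T z w‖ ≤ (1 + D * M) * ‖w‖ := by
    intro z hz w
    rw [res_apply (hstep z hz).1]
    calc ‖w + z • fres T z w‖ ≤ ‖w‖ + ‖z‖ * ‖fres T z w‖ := by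
          refine le_trans (norm_add_le _ _) ?_
          rw [norm_smul]
      _ ≤ ‖w‖ + D * (M * ‖w‖) := by
          refine add_le_add_right ?_ _
          exact mul_le_mul (hDb z hz) (hfresT z hz w) (norm_nonneg _) hD0
      _ = (1 + D * M) * ‖w‖ := by ring
  -- the two families
  set A : ℕ → ℂ → L2 := fun n z => P n (res (S n) z v) with hA
  set h : ℂ → L2 := fun z => res T z v with hh
  set L : ℝ := (1 + D * M) * (M * ‖v‖) with hL
  have hL0 : 0 ≤ L := by
    rw [hL]
    have : (0:ℝ) ≤ M := le_of_lt hMpos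
    positivity
  have hLipn : ∀ᶠ n in atTop, ∀ l ∈ Kc, ∀ m ∈ Kc, ‖A n l - A n m‖ ≤ L * ‖l - m‖ := by
    filter_upwards [hUB] with n hn l hl m hm
    have h1 := (hn l hl).1
    have h2 := (hn m hm).1
    have hAsub : A n l - A n m = P n (res (S n) l v - res (S n) m v) := by
      rw [hA]; simp only [map_sub]
    rw [hAsub]
    refine le_trans (hPnorm n _) ?_
    have hrs := congrArg (fun (X : L2op) => X v) (res_sub h1 h2)
    simp only [ContinuousLinearMap.sub_apply, ContinuousLinearMap.smul_apply,
      ContinuousLinearMap.mul_apply] at hrs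
    rw [hrs, norm_smul]
    rw [mul_comm (L) (‖l - m‖), hL]
    refine mul_le_mul_of_nonneg_left ?_ (norm_nonneg _)
    calc ‖res (S n) l (fres (S n) m v)‖ ≤ (1 + D * M) * ‖fres (S n) m v‖ :=
          hresSbnd n l hl h1 (hn l hl).2 _
      _ ≤ (1 + D * M) * (M * ‖v‖) := by
          refine mul_le_mul_of_nonneg_left ?_ (by positivity)
          exact le_trans ((fres (S n) m).le_opNorm v)
            (mul_le_mul_of_nonneg_right (hn m hm).2 (norm_nonneg v))
  have hLipT : ∀ l ∈ Kc, ∀ m ∈ Kc, ‖h l - h m‖ ≤ L * ‖l - m‖ := by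
    intro l hl m hm
    have hrs := congrArg (fun (X : L2op) => X v) (res_sub (hstep l hl).1 (hstep m hm).1)
    simp only [ContinuousLinearMap.sub_apply, ContinuousLinearMap.smul_apply,
      ContinuousLinearMap.mul_apply] at hrs
    rw [hh]
    simp only []
    rw [hrs, norm_smul, mul_comm (L) (‖l - m‖), hL]
    refine mul_le_mul_of_nonneg_left ?_ (norm_nonneg _)
    calc ‖res T l (fres T m v)‖ ≤ (1 + D * M) * ‖fres T m v‖ := hresTbnd l hl _
      _ ≤ (1 + D * M) * (M * ‖v‖) := by
          refine mul_le_mul_of_nonneg_left (hfresT m hm v) (by positivity)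
  have hpt : ∀ m ∈ Kc, Tendsto (fun n => A n m) atTop (𝓝 (h m)) := by
    intro m hm
    have hres : Tendsto (fun n => res (S n) m v) atTop (𝓝 (res T m v)) := by
      have hev : ∀ᶠ n in atTop, v + m • fres (S n) m v = res (S n) m v := by
        filter_upwards [hUB] with n hn
        exact (res_apply (hn m hm).1 v).symm
      have hlim : Tendsto (fun n => v + m • fres (S n) m v) atTop
          (𝓝 (v + m • fres T m v)) :=
        tendsto_const_nhds.add (((hstep m hm).2 v).const_smul m)
      rw [res_apply (hstep m hm).1]
      exact hlim.congr' hev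
    exact hPcomp _ _ hres
  -- eventual smallness of b and chi
  have hbev : ∀ᶠ n in atTop, ∀ z ∈ Kc, ‖b n * z‖ ≤ 1 / 2 := by
    have hpos : (0:ℝ) < 1 / (2 * (D + 1)) := by positivity
    have := hb0 (Metric.ball_mem_nhds (0:ℝ) hpos)
    filter_upwards [this] with n hn z hz
    rw [Set.mem_preimage, Metric.mem_ball, dist_zero_right, Real.norm_eq_abs,
      abs_of_nonneg (norm_nonneg _)] at hn
    rw [norm_mul]
    calc ‖b n‖ * ‖z‖ ≤ (1 / (2 * (D + 1))) * D := by
          refine mul_le_mul (le_of_lt hn) (hDb z hz) (norm_nonneg _) (le_of_lt hpos)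
      _ ≤ 1 / 2 := by
          rw [div_mul_eq_mul_div, div_le_div_iff₀ (by positivity) (by norm_num)]
          nlinarith
  have htauev : ∀ᶠ n in atTop, |s| < tau n := hiv.tendsto_top.eventually_gt_atTop |s|
  -- the key eventual identity
  have hKEY : ∀ᶠ n in atTop, ∀ z ∈ Kc,
      IsUnit (1 - lamn b z n • (P n * T)) ∧
      resKerN T K kt kt' (tau n) (P n) (lamn b z n) s t - resKer T K kt kt' z s t
        = z * (inner ℂ (kt s) (A n z - h z) : ℂ) := by
    filter_upwards [hUB, hbev, htauev] with n hn hsm htau z hz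
    have hu1 : IsUnit (1 - z • S n) := (hn z hz).1
    set c : ℂ := 1 - b n * z with hc
    have hcne : c ≠ 0 := by
      intro h0
      have : b n * z = 1 := by rw [hc] at h0; linear_combination -h0
      have h1 : ‖b n * z‖ = 1 := by rw [this, norm_one]
      have := hsm z hz
      rw [h1] at this
      norm_num at this
    set μ : ℂ := lamn b z n with hμ
    have hcu : μ * c = z := by
      rw [hμ, lamn, hc, mul_assoc, inv_mul_cancel₀ hcne, mul_one]
    have hSn : S n = b n • (1 : L2op) + P n * T * P n := by rw [hSdef]
    have hcmul : c • ((1 : L2op) - μ • (P n * T * P n)) = 1 - z • S n := by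
      rw [hSn, smul_sub, smul_smul, mul_comm c μ, hcu, smul_add, smul_smul, hc]
      module
    have hu2 : IsUnit ((1 : L2op) - μ • (P n * T * P n)) := by
      have h1 : (1 : L2op) - μ • (P n * T * P n) = c⁻¹ • (1 - z • S n) := by
        rw [← hcmul, inv_smul_smul₀ hcne]
      have h2 : c⁻¹ • ((1 : L2op) - z • S n) = (c⁻¹ • (1 : L2op)) * (1 - z • S n) := by
        rw [smul_mul_assoc, one_mul]
      have h3 : IsUnit (c⁻¹ • (1 : L2op)) := by
        refine aux_isUnit (y := c • (1 : L2op)) ?_ ?_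
        · rw [smul_mul_assoc, one_mul, smul_smul, inv_mul_cancel₀ hcne, one_smul]
        · rw [smul_mul_assoc, one_mul, smul_smul, mul_inv_cancel₀ hcne, one_smul]
      rw [h1, h2]
      exact h3.mul hu1
    have hresTt : res (P n * T * P n) μ = c • res (S n) z := by
      refine aux_ringInverse_eq ?_ ?_
      · rw [mul_smul_comm, ← smul_mul_assoc, hcmul, res_right hu1]
      · rw [smul_mul_assoc, ← mul_smul_comm, hcmul, res_left hu1]
    have he1 : (μ • (P n * T)) * P n = μ • (P n * T * P n) := by
      rw [smul_mul_assoc]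
    have he2 : P n * (μ • (P n * T)) = μ • (P n * T) := by
      rw [mul_smul_comm, ← mul_assoc, hPidem n]
    have hu3 : IsUnit (1 - μ • (P n * T)) := by
      have := aux_unit_swap (x := μ • (P n * T)) (y := P n) (by rw [he1]; exact hu2)
      rw [he2] at this
      exact this
    have hPTt : P n * (P n * T * P n) = P n * T * P n := by
      rw [← mul_assoc, ← mul_assoc, hPidem n]
    have hA1 : (1 - μ • (P n * T)) * (P n * res (P n * T * P n) μ) = P n := by
      have h4 : P n * ((1 - μ • (P n * T * P n)) * res (P n * T * P n) μ) = P n := by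
        rw [res_right hu2, mul_one]
      calc (1 - μ • (P n * T)) * (P n * res (P n * T * P n) μ)
          = P n * res (P n * T * P n) μ
            - μ • ((P n * T * P n) * res (P n * T * P n) μ) := by
            rw [sub_mul, one_mul, smul_mul_assoc,
              ← mul_assoc (P n * T) (P n) (res (P n * T * P n) μ)]
        _ = P n * ((1 - μ • (P n * T * P n)) * res (P n * T * P n) μ) := by
            rw [sub_mul, one_mul, smul_mul_assoc, mul_sub, mul_smul_comm,
              ← mul_assoc (P n) (P n * T * P n) (res (P n * T * P n) μ), hPTt]
        _ = P n := h4
    have hswap : res (P n * T) μ * P n = P n * res (P n * T * P n) μ := by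
      calc res (P n * T) μ * P n
          = res (P n * T) μ * ((1 - μ • (P n * T)) * (P n * res (P n * T * P n) μ)) := by
            rw [hA1]
        _ = (res (P n * T) μ * (1 - μ • (P n * T))) * (P n * res (P n * T * P n) μ) := by
            rw [mul_assoc (res (P n * T) μ) (1 - μ • (P n * T)) (P n * res (P n * T * P n) μ)]
        _ = P n * res (P n * T * P n) μ := by rw [res_left hu3, one_mul]
    have hvec : res (P n * T) μ (P n v) = c • A n z := by
      have h5 := congrArg (fun (X : L2op) => X v) hswap
      simp only [ContinuousLinearMap.mul_apply] at h5
      rw [h5, hresTt]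
      simp only [ContinuousLinearMap.smul_apply]
      rw [ContinuousLinearMap.map_smul]
    refine ⟨hu3, ?_⟩
    simp only [resKerN, resKer]
    rw [chi_eq_one htau, hvec, inner_smul_right, inner_sub_right]
    simp only [hh]
    linear_combination (inner ℂ (kt s) (A n z) : ℂ) * hcu
  refine ⟨hKEY.mono fun n hn lam hlam => (hn lam hlam).1, ?_⟩
  rw [Metric.tendsto_atTop]
  intro eps heps
  set eps' : ℝ := eps / (2 * (D * ‖kt s‖ + 1)) with heps'
  have heps'pos : 0 < eps' := by rw [heps']; positivity
  have hUC := unifConv hKc hL0 hLipn hLipT hpt heps'pos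
  have hq : D * ‖kt s‖ * eps' ≤ eps / 2 := by
    have hq1 : (D * ‖kt s‖ + 1) * eps' = eps / 2 := by
      rw [heps']; field_simp
    nlinarith [norm_nonneg (kt s), heps'pos.le]
  have hfin : ∀ᶠ n in atTop, dist (⨆ lam ∈ Kc,
      ‖resKerN T K kt kt' (tau n) (P n) (lamn b lam n) s t
        - resKer T K kt kt' lam s t‖) 0 < eps := by
    filter_upwards [hKEY, hUC] with n h1 h2
    have hub : ∀ lam : ℂ, (⨆ (_ : lam ∈ Kc),
        ‖resKerN T K kt kt' (tau n) (P n) (lamn b lam n) s t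
          - resKer T K kt kt' lam s t‖) ≤ eps / 2 := by
      intro lam
      refine Real.iSup_le (fun hlam => ?_) (by positivity)
      rw [(h1 lam hlam).2]
      calc ‖lam * (inner ℂ (kt s) (A n lam - h lam) : ℂ)‖
          = ‖lam‖ * ‖(inner ℂ (kt s) (A n lam - h lam) : ℂ)‖ := norm_mul _ _
        _ ≤ D * (‖kt s‖ * eps') := by
            refine mul_le_mul (hDb lam hlam) ?_ (norm_nonneg _) hD0
            refine le_trans (norm_inner_le_norm _ _) ?_
            exact mul_le_mul_of_nonneg_left (h2 lam hlam) (norm_nonneg _)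
        _ = D * ‖kt s‖ * eps' := by ring
        _ ≤ eps / 2 := hq
    have hsup : (⨆ lam ∈ Kc, ‖resKerN T K kt kt' (tau n) (P n) (lamn b lam n) s t
        - resKer T K kt kt' lam s t‖) ≤ eps / 2 :=
      Real.iSup_le hub (by positivity)
    have hnn : 0 ≤ ⨆ lam ∈ Kc, ‖resKerN T K kt kt' (tau n) (P n) (lamn b lam n) s t
        - resKer T K kt kt' lam s t‖ :=
      Real.iSup_nonneg fun lam => Real.iSup_nonneg fun _ => norm_nonneg _
    rw [Real.dist_eq, sub_zero, abs_of_nonneg hnn]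
    linarith
  exact eventually_atTop.mp hfin
end
end

section
/- Let T be a bounded linear operator on L² induced by a K⁰-kernel 𝐓 satisfying condition (iv), with subkernel operators Tₙ = PₙT, and suppose that ‖(T − Tₙ)Tₙᵐ‖ → 0 as n → ∞ for some m ∈ ℕ. If λ is a nonzero regular value for T, then λ is not the limit of any sequence {ξₙ} with ξₙ ∈ Λ(Tₙ) for each n. -/
open MeasureTheory Filter Topology ContinuousLinearMap
open scoped ENNReal NNReal

noncomputable section

set_option maxHeartbeats 1000000
set_option synthInstance.maxHeartbeats 100000

section AuxiliaryLemmas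

open Metric Set

variable {H : Type*} [NormedAddCommGroup H] [InnerProductSpace ℂ H] [CompleteSpace H]

private lemma aux_norm_pow_le {R : Type*} [SeminormedRing R] (A : R) :
    ∀ j : ℕ, 1 ≤ j → ‖A ^ j‖ ≤ ‖A‖ ^ j := by
  intro j hj
  induction j with
  | zero => omega
  | succ k ih =>
      rcases Nat.eq_zero_or_pos k with rfl | hk
      · simp
      · rw [pow_succ, pow_succ]
        calc ‖A ^ k * A‖ ≤ ‖A ^ k‖ * ‖A‖ := norm_mul_le _ _
          _ ≤ ‖A‖ ^ k * ‖A‖ := mul_le_mul_of_nonneg_right (ih hk) (norm_nonneg _)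

private lemma aux_pow_lower (B : H →L[ℂ] H) {c : ℝ} (hc : 0 < c)
    (hlow : ∀ x, c * ‖x‖ ≤ ‖B x‖) : ∀ (k : ℕ) (x : H), c ^ k * ‖x‖ ≤ ‖(B ^ k) x‖ := by
  intro k
  induction k with
  | zero => intro x; simp
  | succ k ih =>
      intro x
      have h1 : (B ^ (k + 1)) x = (B ^ k) (B x) := by
        rw [pow_succ, ContinuousLinearMap.mul_apply]
      rw [h1]
      calc c ^ (k + 1) * ‖x‖ = c ^ k * (c * ‖x‖) := by ring
        _ ≤ c ^ k * ‖B x‖ :=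
            mul_le_mul_of_nonneg_left (hlow x) (by positivity)
        _ ≤ ‖(B ^ k) (B x)‖ := ih (B x)

private lemma aux_isUnit_one_sub (C : H →L[ℂ] H) (hC : IsCompactOperator ⇑C) {c : ℝ}
    (hc : 0 < c) (hlow : ∀ x, c * ‖x‖ ≤ ‖(1 - C) x‖) : IsUnit (1 - C) := by
  set B : H →L[ℂ] H := 1 - C with hB
  have hpow := aux_pow_lower B hc hlow
  have hinj : ∀ (k : ℕ) (x : H), (B ^ k) x = 0 → x = 0 := by
    intro k x hx
    have h1 := hpow k x
    rw [hx, norm_zero] at h1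
    have h2 : (0 : ℝ) < c ^ k := pow_pos hc k
    have hxle : ‖x‖ ≤ 0 := by nlinarith [norm_nonneg x]
    simpa using norm_le_zero_iff.mp hxle
  set Y : ℕ → Submodule ℂ H := fun k => LinearMap.range ((B ^ k : H →L[ℂ] H) : H →ₗ[ℂ] H) with hY
  have hYclosed : ∀ k, IsClosed ((Y k : Set H)) := by
    intro k
    have hanti : AntilipschitzWith ((⟨c, hc.le⟩ : ℝ≥0) ^ k)⁻¹ ⇑(B ^ k) := by
      apply AddMonoidHomClass.antilipschitz_of_bound
      intro x
      have h1 := hpow k x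
      have h2 : (0 : ℝ) < c ^ k := pow_pos hc k
      have h3 : ((((⟨c, hc.le⟩ : ℝ≥0) ^ k)⁻¹ : ℝ≥0) : ℝ) = (c ^ k)⁻¹ := by
        push_cast; rfl
      rw [h3]
      calc ‖x‖ = (c ^ k)⁻¹ * (c ^ k * ‖x‖) := by field_simp
        _ ≤ (c ^ k)⁻¹ * ‖(B ^ k) x‖ :=
            mul_le_mul_of_nonneg_left h1 (by positivity)
    have h4 : IsClosed (Set.range ⇑(B ^ k)) :=
      hanti.isClosed_range (B ^ k).uniformContinuous
    have h5 : (Y k : Set H) = Set.range ⇑(B ^ k) := by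
      ext z
      simp only [hY, LinearMap.mem_range, Set.mem_range, ContinuousLinearMap.coe_coe, SetLike.mem_coe]
    rw [h5]; exact h4
  by_cases hsurj : LinearMap.range (B : H →ₗ[ℂ] H) = ⊤
  · have hker : LinearMap.ker (B : H →ₗ[ℂ] H) = ⊥ := by
      rw [LinearMap.ker_eq_bot']
      intro x hx
      exact hinj 1 x (by simpa [pow_one] using hx)
    set e := ContinuousLinearEquiv.ofBijective B hker hsurj with he
    have heB : ∀ z, e z = B z := by
      intro z; rfl
    refine ⟨⟨B, (e.symm : H →L[ℂ] H), ?_, ?_⟩, rfl⟩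
    · ext x
      have h1 : B ((e.symm : H →L[ℂ] H) x) = e (e.symm x) := (heB _).symm
      simp only [ContinuousLinearMap.mul_apply, ContinuousLinearMap.one_apply]
      rw [ContinuousLinearEquiv.coe_coe, ← heB (e.symm x), e.apply_symm_apply]
    · ext x
      simp only [ContinuousLinearMap.mul_apply, ContinuousLinearMap.one_apply]
      rw [ContinuousLinearEquiv.coe_coe, ← heB x, e.symm_apply_apply]
  · exfalso
    have hBmem : ∀ (k : ℕ) (x : H), x ∈ Y k → B x ∈ Y (k + 1) := by
      intro k x hx
      obtain ⟨z, rfl⟩ := LinearMap.mem_range.mp hx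
      refine LinearMap.mem_range.mpr ⟨z, ?_⟩
      simp only [ContinuousLinearMap.coe_coe]
      rw [pow_succ', ContinuousLinearMap.mul_apply]
    have hle : ∀ k, Y (k + 1) ≤ Y k := by
      intro k y hy
      obtain ⟨z, rfl⟩ := LinearMap.mem_range.mp hy
      refine LinearMap.mem_range.mpr ⟨B z, ?_⟩
      simp only [ContinuousLinearMap.coe_coe]
      rw [pow_succ, ContinuousLinearMap.mul_apply]
    have hYanti : ∀ {k j : ℕ}, k ≤ j → Y j ≤ Y k := by
      intro k j hkj
      induction hkj with
      | refl => exact le_rfl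
      | step _ ih => exact le_trans (hle _) ih
    have hnotle : ∀ k, ¬(Y k ≤ Y (k + 1)) := by
      intro k hk
      apply hsurj
      rw [Submodule.eq_top_iff']
      intro x
      have hx : (B ^ k) x ∈ Y (k + 1) := hk (LinearMap.mem_range.mpr ⟨x, rfl⟩)
      obtain ⟨z, hz⟩ := LinearMap.mem_range.mp hx
      have hz2 : (B ^ k) (B z) = (B ^ k) x := by
        rw [← ContinuousLinearMap.mul_apply, ← pow_succ]; exact hz
      have hz3 : (B ^ k) (B z - x) = 0 := by
        rw [map_sub, hz2, sub_self]
      have hz4 : B z = x := by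
        have := hinj k _ hz3; rwa [sub_eq_zero] at this
      exact LinearMap.mem_range.mpr ⟨z, hz4⟩
    have hvec : ∀ k, ∃ x : H, ‖x‖ = 1 ∧ x ∈ Y k ∧
        ∀ v ∈ Y (k + 1), (inner ℂ v x : ℂ) = 0 := by
      intro k
      obtain ⟨y, hyk, hyn⟩ := SetLike.not_le_iff_exists.mp (hnotle k)
      haveI : CompleteSpace (Y (k + 1)) := (hYclosed (k + 1)).completeSpace_coe
      set w : H := y - (Submodule.orthogonalProjection (Y (k + 1)) y : H) with hw
      have hwperp : w ∈ (Y (k + 1))ᗮ := Submodule.sub_starProjection_mem_orthogonal (K := Y (k + 1)) y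
      have hwne : w ≠ 0 := by
        intro h0
        apply hyn
        have h1 : y = ((Submodule.orthogonalProjection (Y (k + 1)) y : H)) := by
          rwa [sub_eq_zero] at h0
        rw [h1]; exact SetLike.coe_mem _
      have hwm : w ∈ Y k := sub_mem hyk (hle k (SetLike.coe_mem _))
      have hnw : (0 : ℝ) < ‖w‖ := norm_pos_iff.mpr hwne
      refine ⟨((‖w‖ : ℂ))⁻¹ • w, ?_, Submodule.smul_mem _ _ hwm, ?_⟩
      · rw [norm_smul (((‖w‖ : ℂ))⁻¹) w, norm_inv]
        have h2 : ‖((‖w‖ : ℝ) : ℂ)‖ = ‖w‖ := by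
          rw [Complex.norm_real, norm_norm]
        rw [h2, inv_mul_cancel₀ hnw.ne']
      · intro v hv
        rw [inner_smul_right, (Submodule.mem_orthogonal _ _).mp hwperp v hv, mul_zero]
    choose x hx1 hxmem hxperp using hvec
    have hsep : ∀ k j, k < j → (1 : ℝ) ≤ ‖C (x k) - C (x j)‖ := by
      intro k j hkj
      have hCx : ∀ i, C (x i) = x i - B (x i) := by
        intro i
        rw [hB]
        simp only [ContinuousLinearMap.sub_apply, ContinuousLinearMap.one_apply]
        abel
      set v : H := B (x k) + x j - B (x j) with hv
      have hvmem : v ∈ Y (k + 1) := by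
        refine sub_mem (add_mem (hBmem k _ (hxmem k)) (hYanti hkj (hxmem j))) ?_
        exact hYanti (by omega) (hBmem j _ (hxmem j))
      have hdiff : C (x k) - C (x j) = x k - v := by
        rw [hCx, hCx, hv]; abel
      have hip : (inner ℂ v (x k) : ℂ) = 0 := hxperp k v hvmem
      have h1 : (inner ℂ (x k - v) (x k) : ℂ) = 1 := by
        rw [inner_sub_left, hip, sub_zero, inner_self_eq_norm_sq_to_K, hx1 k]
        norm_num
      calc (1 : ℝ) = ‖(inner ℂ (x k - v) (x k) : ℂ)‖ := by rw [h1, norm_one]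
        _ ≤ ‖x k - v‖ * ‖x k‖ := norm_inner_le_norm _ _
        _ = ‖C (x k) - C (x j)‖ := by rw [hx1 k, mul_one, hdiff]
    have hcomp := (hC.isCompact_closure_image_closedBall 1).totallyBounded
    obtain ⟨t, htfin, hcov⟩ := Metric.totallyBounded_iff.mp hcomp (1 / 2) (by norm_num)
    have hmem : ∀ k, ∃ y ∈ t, C (x k) ∈ ball y (1 / 2) := by
      intro k
      have h1 : C (x k) ∈ closure (⇑C '' closedBall 0 1) :=
        subset_closure ⟨x k, by rw [mem_closedBall_zero_iff, hx1 k], rfl⟩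
      simpa using hcov h1
    choose y hyt hyb using hmem
    haveI := htfin.to_subtype
    obtain ⟨k, j, hkj, hyy⟩ :=
      Finite.exists_ne_map_eq_of_infinite (fun k => (⟨y k, hyt k⟩ : t))
    have hyeq : y k = y j := by simpa using congrArg Subtype.val hyy
    have hd : dist (C (x k)) (C (x j)) < 1 := by
      have h1 : dist (C (x k)) (y k) < 1 / 2 := mem_ball.mp (hyb k)
      have h2 : dist (C (x j)) (y j) < 1 / 2 := mem_ball.mp (hyb j)
      have h3 : dist (y k) (C (x j)) < 1 / 2 := by rw [hyeq, dist_comm]; exact h2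
      have h4 := dist_triangle (C (x k)) (y k) (C (x j))
      linarith
    rcases hkj.lt_or_gt with h | h
    · have h3 := hsep k j h
      rw [dist_eq_norm] at hd
      linarith
    · have h3 := hsep j k h
      rw [dist_eq_norm, norm_sub_rev] at hd
      linarith

private lemma aux_nuclear_compact {A : L2op} (hA : IsNuclear A) : IsCompactOperator ⇑A := by
  obtain ⟨g, h, hsum, hrep⟩ := hA
  have hbound : ∀ (f : L2), ‖f‖ ≤ 1 → ∀ k, ‖(inner ℂ f (g k) : ℂ) • h k‖ ≤ ‖g k‖ * ‖h k‖ := by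
    intro f hf k
    rw [norm_smul (inner ℂ f (g k) : ℂ) (h k)]
    have h1 : ‖(inner ℂ f (g k) : ℂ)‖ ≤ ‖g k‖ := by
      calc ‖(inner ℂ f (g k) : ℂ)‖ ≤ ‖f‖ * ‖g k‖ := norm_inner_le_norm _ _
        _ ≤ 1 * ‖g k‖ := mul_le_mul_of_nonneg_right hf (norm_nonneg _)
        _ = ‖g k‖ := one_mul _
    exact mul_le_mul_of_nonneg_right h1 (norm_nonneg _)
  have htb : TotallyBounded (⇑A '' closedBall 0 1) := by
    rw [Metric.totallyBounded_iff]
    intro ε hε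
    have htail : Tendsto (fun N => ∑' k, ‖g (k + N)‖ * ‖h (k + N)‖) atTop (𝓝 0) :=
      tendsto_sum_nat_add (fun k => ‖g k‖ * ‖h k‖)
    obtain ⟨N, hN⟩ := (htail.eventually_lt_const (show (0 : ℝ) < ε / 2 by positivity)).exists
    set R : ℝ := 1 + ∑ k : Fin N, ‖g (k : ℕ)‖ with hR
    have hR0 : (0 : ℝ) ≤ R := by positivity
    set φ : (Fin N → ℂ) → L2 := fun cv => ∑ k : Fin N, cv k • h (k : ℕ) with hφ
    have hφc : Continuous φ := by
      apply continuous_finset_sum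
      intro i _
      exact (continuous_apply i).smul continuous_const
    have hKc : IsCompact (φ '' closedBall 0 R) := (isCompact_closedBall _ _).image hφc
    obtain ⟨t, htfin, hcov⟩ :=
      Metric.totallyBounded_iff.mp hKc.totallyBounded (ε / 2) (by positivity)
    refine ⟨t, htfin, ?_⟩
    rintro _ ⟨f, hf, rfl⟩
    rw [mem_closedBall_zero_iff] at hf
    have hsumf : Summable (fun k => (inner ℂ f (g k) : ℂ) • h k) := by
      apply Summable.of_norm
      exact Summable.of_nonneg_of_le (fun k => norm_nonneg _) (hbound f hf) hsum
    have hsplit : ∑ i ∈ Finset.range N, (inner ℂ f (g i) : ℂ) • h i +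
        ∑' i, (inner ℂ f (g (i + N)) : ℂ) • h (i + N) =
        ∑' i, (inner ℂ f (g i) : ℂ) • h i := Summable.sum_add_tsum_nat_add N hsumf
    set cf : Fin N → ℂ := fun k => inner ℂ f (g (k : ℕ)) with hcf
    have hφcf : φ cf = ∑ i ∈ Finset.range N, (inner ℂ f (g i) : ℂ) • h i := by
      rw [hφ]
      exact Fin.sum_univ_eq_sum_range (fun i => (inner ℂ f (g i) : ℂ) • h i) N
    have hcfm : cf ∈ closedBall (0 : Fin N → ℂ) R := by
      rw [mem_closedBall_zero_iff]
      refine (pi_norm_le_iff_of_nonneg hR0).mpr ?_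
      intro k
      have h1 : ‖cf k‖ ≤ ‖g (k : ℕ)‖ := by
        calc ‖cf k‖ ≤ ‖f‖ * ‖g (k : ℕ)‖ := norm_inner_le_norm _ _
          _ ≤ 1 * ‖g (k : ℕ)‖ := mul_le_mul_of_nonneg_right hf (norm_nonneg _)
          _ = ‖g (k : ℕ)‖ := one_mul _
      have h2 : ‖g (k : ℕ)‖ ≤ ∑ i : Fin N, ‖g (i : ℕ)‖ :=
        Finset.single_le_sum (f := fun i : Fin N => ‖g (i : ℕ)‖)
          (fun i _ => norm_nonneg _) (Finset.mem_univ k)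
      rw [hR]; linarith
    obtain ⟨yy, hyyt, hyyb⟩ : ∃ yy ∈ t, φ cf ∈ ball yy (ε / 2) := by
      simpa using hcov ⟨cf, hcfm, rfl⟩
    have htailsum : Summable (fun k => ‖g (k + N)‖ * ‖h (k + N)‖) :=
      (summable_nat_add_iff N).mpr hsum
    have htv : Summable (fun k => ‖(inner ℂ f (g (k + N)) : ℂ) • h (k + N)‖) :=
      Summable.of_nonneg_of_le (fun k => norm_nonneg _) (fun k => hbound f hf (k + N))
        htailsum
    have hAf : A f - φ cf = ∑' k, (inner ℂ f (g (k + N)) : ℂ) • h (k + N) := by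
      rw [hrep f, ← hsplit, hφcf]
      abel
    have hdist : ‖A f - φ cf‖ < ε / 2 := by
      rw [hAf]
      calc ‖∑' k, (inner ℂ f (g (k + N)) : ℂ) • h (k + N)‖
          ≤ ∑' k, ‖(inner ℂ f (g (k + N)) : ℂ) • h (k + N)‖ := norm_tsum_le_tsum_norm htv
        _ ≤ ∑' k, ‖g (k + N)‖ * ‖h (k + N)‖ :=
            Summable.tsum_le_tsum (fun k => hbound f hf (k + N)) htv htailsum
        _ < ε / 2 := hN
    refine Set.mem_iUnion₂.mpr ⟨yy, hyyt, ?_⟩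
    rw [mem_ball] at hyyb ⊢
    calc dist (A f) yy ≤ dist (A f) (φ cf) + dist (φ cf) yy := dist_triangle _ _ _
      _ < ε / 2 + ε / 2 := by
          rw [dist_eq_norm]
          exact add_lt_add hdist hyyb
      _ = ε := by ring
  have hcl : IsCompact (closure (⇑((A : L2 →ₗ[ℂ] L2)) '' closedBall 0 1)) := by
    rw [ContinuousLinearMap.coe_coe]
    exact TotallyBounded.isCompact_of_isClosed htb.closure isClosed_closure
  have hres :=
    (isCompactOperator_iff_isCompact_closure_image_closedBall (A : L2 →ₗ[ℂ] L2)
      one_pos).mpr hcl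
  simpa using hres

private lemma aux_exists_small (C : L2op) (hC : IsCompactOperator ⇑C)
    (h : ¬IsUnit (1 - C)) {δ : ℝ} (hδ : 0 < δ) :
    ∃ f : L2, ‖f‖ = 1 ∧ ‖(1 - C) f‖ < δ := by
  by_contra hcon
  push_neg at hcon
  apply h
  apply aux_isUnit_one_sub C hC hδ
  intro xv
  rcases eq_or_ne xv 0 with rfl | hx
  · simp
  · have hnx : (0 : ℝ) < ‖xv‖ := norm_pos_iff.mpr hx
    have hu : ‖((‖xv‖ : ℂ))⁻¹ • xv‖ = 1 := by
      rw [norm_smul (((‖xv‖ : ℂ))⁻¹) xv, norm_inv]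
      have h2 : ‖((‖xv‖ : ℝ) : ℂ)‖ = ‖xv‖ := by rw [Complex.norm_real, norm_norm]
      rw [h2, inv_mul_cancel₀ hnx.ne']
    have h2 := hcon _ hu
    rw [_root_.map_smul, norm_smul (((‖xv‖ : ℂ))⁻¹) ((1 - C) xv), norm_inv] at h2
    have h3 : ‖((‖xv‖ : ℝ) : ℂ)‖ = ‖xv‖ := by rw [Complex.norm_real, norm_norm]
    rw [h3] at h2
    have h4 : δ * ‖xv‖ ≤ (‖xv‖⁻¹ * ‖(1 - C) xv‖) * ‖xv‖ :=
      mul_le_mul_of_nonneg_right h2 hnx.le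
    have h5 : (‖xv‖⁻¹ * ‖(1 - C) xv‖) * ‖xv‖ = ‖(1 - C) xv‖ := by
      field_simp
    linarith

private lemma aux_chi_norm (τ xr : ℝ) : ‖chi τ xr‖ ≤ 1 := by
  rw [chi, Set.indicator_apply]
  split <;> simp

private lemma aux_P_norm (Pn : L2op) (τ : ℝ)
    (hP : ∀ f : L2, (Pn f : ℝ → ℂ) =ᵐ[volume] fun xr => chi τ xr * (f : ℝ → ℂ) xr)
    (f : L2) : ‖Pn f‖ ≤ ‖f‖ := by
  rw [MeasureTheory.Lp.norm_def, MeasureTheory.Lp.norm_def]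
  apply ENNReal.toReal_mono (MeasureTheory.Lp.eLpNorm_ne_top f)
  apply eLpNorm_mono_ae
  filter_upwards [hP f] with xr hx
  rw [hx, norm_mul]
  calc ‖chi τ xr‖ * ‖(f : ℝ → ℂ) xr‖ ≤ 1 * ‖(f : ℝ → ℂ) xr‖ :=
        mul_le_mul_of_nonneg_right (aux_chi_norm _ _) (norm_nonneg _)
    _ = ‖(f : ℝ → ℂ) xr‖ := one_mul _

end AuxiliaryLemmas

theorem statement10 (T : L2op) (K : ℝ → ℝ → ℂ) (kt kt' : ℝ → L2)
    (hK : IsK0Kernel K kt kt') (hT : IsInducedBy T K)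
    (tau : ℕ → ℝ) (P : ℕ → L2op) (hiv : ConditionIV K T tau P)
    (m : ℕ) (hm : 1 ≤ m)
    (hconv : Tendsto (fun n => ‖(T - P n * T) * (P n * T) ^ m‖) atTop (𝓝 (0 : ℝ)))
    (lam : ℂ) (hne : lam ≠ 0) (hreg : lam ∈ regularSet T)
    (xi : ℕ → ℂ) (hxi : ∀ n, xi n ∉ regularSet (P n * T)) :
    ¬ Tendsto xi atTop (𝓝 lam) := by
  intro htend
  obtain ⟨u, hu⟩ := hreg
  have hAle : ∀ n, ‖P n * T‖ ≤ ‖T‖ := by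
    intro n
    apply ContinuousLinearMap.opNorm_le_bound _ (norm_nonneg T)
    intro fx
    rw [ContinuousLinearMap.mul_apply]
    exact le_trans (aux_P_norm (P n) (tau n) (hiv.proj n) (T fx)) (T.le_opNorm fx)
  have hex : ∀ n, ∃ fv : L2, ‖fv‖ = 1 ∧
      ‖(1 - xi n • (P n * T)) fv‖ < 1 / (n + 1) := by
    intro n
    have hcomp : IsCompactOperator ⇑(xi n • (P n * T)) := by
      have h1 := (aux_nuclear_compact (hiv.nuclear n)).smul (xi n)
      have h2 : ⇑(xi n • (P n * T)) = xi n • ⇑(P n * T) := by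
        funext z; simp
      rw [h2]
      exact h1
    have hnu : ¬IsUnit (1 - xi n • (P n * T)) := hxi n
    exact aux_exists_small _ hcomp hnu (by positivity)
  choose f hf1 hfs using hex
  set c1 : ℝ := ‖lam‖ + 1 with hc1
  have hc10 : (0 : ℝ) < c1 := by positivity
  set Cg : ℝ := (m : ℝ) * (1 + c1 * ‖T‖) ^ m with hCg
  have hCg0 : (0 : ℝ) ≤ Cg := by positivity
  have hd0 : Tendsto (fun n => ‖(1 - xi n • (P n * T)) (f n)‖) atTop (𝓝 0) := by
    apply squeeze_zero (fun n => norm_nonneg _) (fun n => (hfs n).le)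
    exact tendsto_one_div_add_atTop_nhds_zero_nat
  have hxil : Tendsto (fun n => ‖xi n - lam‖) atTop (𝓝 0) := by
    have h1 := (htend.sub_const lam).norm
    simpa using h1
  have hxib : ∀ᶠ n in atTop, ‖xi n‖ ≤ c1 := by
    have h1 : ‖lam‖ < c1 := by rw [hc1]; linarith
    exact htend.norm.eventually_le_const h1
  have hkey : ∀ n, ‖xi n‖ ≤ c1 → ‖(1 - lam • T) (f n)‖ ≤
      ‖(1 - xi n • (P n * T)) (f n)‖ +
        c1 * (c1 ^ m * ‖(T - P n * T) * (P n * T) ^ m‖ +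
          2 * ‖T‖ * (Cg * ‖(1 - xi n • (P n * T)) (f n)‖)) +
        ‖xi n - lam‖ * ‖T‖ := by
    intro n hb
    have hXn : ‖xi n • (P n * T)‖ ≤ c1 * ‖T‖ := by
      rw [norm_smul (xi n) (P n * T)]
      exact mul_le_mul hb (hAle n) (norm_nonneg _) hc10.le
    have hbase : (1 : ℝ) ≤ 1 + c1 * ‖T‖ :=
      le_add_of_nonneg_right (by positivity)
    have hgs : ‖∑ j ∈ Finset.range m, (xi n • (P n * T)) ^ j‖ ≤ Cg := by
      calc ‖∑ j ∈ Finset.range m, (xi n • (P n * T)) ^ j‖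
          ≤ ∑ j ∈ Finset.range m, ‖(xi n • (P n * T)) ^ j‖ := norm_sum_le _ _
        _ ≤ ∑ _j ∈ Finset.range m, (1 + c1 * ‖T‖) ^ m := by
            apply Finset.sum_le_sum
            intro j hj
            have hjm : j ≤ m := (Finset.mem_range.mp hj).le
            rcases Nat.eq_zero_or_pos j with rfl | hjpos
            · have h8 : ‖((xi n • (P n * T)) ^ 0 : L2op)‖ ≤ 1 := by
                rw [pow_zero, ContinuousLinearMap.one_def]
                exact ContinuousLinearMap.norm_id_le
              have h9 := pow_le_pow_left₀ (zero_le_one) hbase m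
              simp only [one_pow] at h9
              exact le_trans h8 h9
            · calc ‖(xi n • (P n * T)) ^ j‖ ≤ ‖xi n • (P n * T)‖ ^ j :=
                    aux_norm_pow_le _ j hjpos
                _ ≤ (1 + c1 * ‖T‖) ^ j :=
                    pow_le_pow_left₀ (norm_nonneg _) (by linarith) j
                _ ≤ (1 + c1 * ‖T‖) ^ m := pow_le_pow_right₀ hbase hjm
        _ = Cg := by
            rw [Finset.sum_const, Finset.card_range, nsmul_eq_mul, hCg]
    have hgeom : (∑ j ∈ Finset.range m, (xi n • (P n * T)) ^ j) *
        (1 - xi n • (P n * T)) = 1 - (xi n • (P n * T)) ^ m := by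
      have h1 := geom_sum_mul (xi n • (P n * T)) m
      have h2 : (∑ j ∈ Finset.range m, (xi n • (P n * T)) ^ j) *
          (1 - xi n • (P n * T)) =
          -((∑ j ∈ Finset.range m, (xi n • (P n * T)) ^ j) *
            (xi n • (P n * T) - 1)) := by noncomm_ring
      rw [h2, h1, neg_sub]
    have hXm : ((xi n • (P n * T)) ^ m) (f n) = f n -
        (∑ j ∈ Finset.range m, (xi n • (P n * T)) ^ j)
          ((1 - xi n • (P n * T)) (f n)) := by
      have h3 : f n - ((xi n • (P n * T)) ^ m) (f n) =
          (∑ j ∈ Finset.range m, (xi n • (P n * T)) ^ j)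
            ((1 - xi n • (P n * T)) (f n)) := by
        rw [← ContinuousLinearMap.mul_apply, hgeom, ContinuousLinearMap.sub_apply,
          ContinuousLinearMap.one_apply]
      rw [← h3]; abel
    have hSb : ‖(∑ j ∈ Finset.range m, (xi n • (P n * T)) ^ j)
        ((1 - xi n • (P n * T)) (f n))‖ ≤ Cg * ‖(1 - xi n • (P n * T)) (f n)‖ := by
      calc ‖(∑ j ∈ Finset.range m, (xi n • (P n * T)) ^ j)
            ((1 - xi n • (P n * T)) (f n))‖
          ≤ ‖∑ j ∈ Finset.range m, (xi n • (P n * T)) ^ j‖ *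
            ‖(1 - xi n • (P n * T)) (f n)‖ := ContinuousLinearMap.le_opNorm _ _
        _ ≤ Cg * ‖(1 - xi n • (P n * T)) (f n)‖ :=
            mul_le_mul_of_nonneg_right hgs (norm_nonneg _)
    have hTA2 : ‖T - P n * T‖ ≤ 2 * ‖T‖ := by
      calc ‖T - P n * T‖ ≤ ‖T‖ + ‖P n * T‖ := norm_sub_le _ _
        _ ≤ ‖T‖ + ‖T‖ := by linarith [hAle n]
        _ = 2 * ‖T‖ := by ring
    have hstep2 : ‖(T - P n * T) (f n)‖ ≤
        c1 ^ m * ‖(T - P n * T) * (P n * T) ^ m‖ +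
          2 * ‖T‖ * (Cg * ‖(1 - xi n • (P n * T)) (f n)‖) := by
      have h1 : f n = ((xi n • (P n * T)) ^ m) (f n) +
          (∑ j ∈ Finset.range m, (xi n • (P n * T)) ^ j)
            ((1 - xi n • (P n * T)) (f n)) := by
        rw [hXm]; abel
      have h2 : (T - P n * T) (f n) =
          (xi n) ^ m • (((T - P n * T) * (P n * T) ^ m) (f n)) +
          (T - P n * T) ((∑ j ∈ Finset.range m, (xi n • (P n * T)) ^ j)
            ((1 - xi n • (P n * T)) (f n))) := by
        conv_lhs => rw [h1]
        rw [map_add]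
        congr 1
        rw [smul_pow, ContinuousLinearMap.smul_apply, _root_.map_smul,
          ContinuousLinearMap.mul_apply]
      rw [h2]
      have h3 : ‖(xi n) ^ m • (((T - P n * T) * (P n * T) ^ m) (f n))‖ ≤
          c1 ^ m * ‖(T - P n * T) * (P n * T) ^ m‖ := by
        rw [norm_smul ((xi n) ^ m) (((T - P n * T) * (P n * T) ^ m) (f n)), norm_pow]
        have h4 : ‖((T - P n * T) * (P n * T) ^ m) (f n)‖ ≤
            ‖(T - P n * T) * (P n * T) ^ m‖ := by
          have := ContinuousLinearMap.le_opNorm ((T - P n * T) * (P n * T) ^ m) (f n)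
          rwa [hf1 n, mul_one] at this
        have h5 : ‖xi n‖ ^ m ≤ c1 ^ m := pow_le_pow_left₀ (norm_nonneg _) hb m
        exact mul_le_mul h5 h4 (norm_nonneg _) (by positivity)
      have h6 : ‖(T - P n * T) ((∑ j ∈ Finset.range m, (xi n • (P n * T)) ^ j)
          ((1 - xi n • (P n * T)) (f n)))‖ ≤
          2 * ‖T‖ * (Cg * ‖(1 - xi n • (P n * T)) (f n)‖) := by
        refine le_trans (ContinuousLinearMap.le_opNorm _ _) ?_
        exact mul_le_mul hTA2 hSb (norm_nonneg _) (by positivity)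
      exact le_trans (norm_add_le _ _) (add_le_add h3 h6)
    have hstep3 : ‖(1 - xi n • T) (f n)‖ ≤
        ‖(1 - xi n • (P n * T)) (f n)‖ +
          c1 * (c1 ^ m * ‖(T - P n * T) * (P n * T) ^ m‖ +
            2 * ‖T‖ * (Cg * ‖(1 - xi n • (P n * T)) (f n)‖)) := by
      have h1 : (1 - xi n • T : L2op) =
          (1 - xi n • (P n * T)) - xi n • (T - P n * T) := by
        rw [smul_sub]; abel
      have h2 : (1 - xi n • T) (f n) =
          (1 - xi n • (P n * T)) (f n) - xi n • ((T - P n * T) (f n)) := by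
        rw [h1, ContinuousLinearMap.sub_apply, ContinuousLinearMap.smul_apply]
      rw [h2]
      refine le_trans (norm_sub_le _ _) ?_
      apply add_le_add le_rfl
      rw [norm_smul (xi n) ((T - P n * T) (f n))]
      exact mul_le_mul hb hstep2 (norm_nonneg _) hc10.le
    have h1 : (1 - lam • T : L2op) = (1 - xi n • T) + (xi n - lam) • T := by
      rw [sub_smul]; abel
    have h2 : (1 - lam • T) (f n) =
        (1 - xi n • T) (f n) + ((xi n - lam) • T) (f n) := by
      rw [h1, ContinuousLinearMap.add_apply]
    rw [h2]
    have h5 : ‖((xi n - lam) • T) (f n)‖ ≤ ‖xi n - lam‖ * ‖T‖ := by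
      rw [ContinuousLinearMap.smul_apply, norm_smul (xi n - lam) (T (f n))]
      have h4 : ‖T (f n)‖ ≤ ‖T‖ := by
        have := T.le_opNorm (f n)
        rwa [hf1 n, mul_one] at this
      exact mul_le_mul_of_nonneg_left h4 (norm_nonneg _)
    exact le_trans (norm_add_le _ _) (add_le_add hstep3 h5)
  have hbnd0 : Tendsto (fun n => ‖(1 - xi n • (P n * T)) (f n)‖ +
      c1 * (c1 ^ m * ‖(T - P n * T) * (P n * T) ^ m‖ +
        2 * ‖T‖ * (Cg * ‖(1 - xi n • (P n * T)) (f n)‖)) +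
      ‖xi n - lam‖ * ‖T‖) atTop (𝓝 0) := by
    have h1 := (hd0.add (((hconv.const_mul (c1 ^ m)).add
      ((hd0.const_mul Cg).const_mul (2 * ‖T‖))).const_mul c1)).add
      (hxil.mul_const ‖T‖)
    simpa using h1
  have hK : ∀ n, (1 : ℝ) ≤ ‖((u⁻¹ : L2opˣ) : L2op)‖ * ‖(1 - lam • T) (f n)‖ := by
    intro n
    have h1 : ((u⁻¹ : L2opˣ) : L2op) ((1 - lam • T) (f n)) = f n := by
      rw [← hu, ← ContinuousLinearMap.mul_apply, Units.inv_mul,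
        ContinuousLinearMap.one_apply]
    calc (1 : ℝ) = ‖f n‖ := (hf1 n).symm
      _ = ‖((u⁻¹ : L2opˣ) : L2op) ((1 - lam • T) (f n))‖ := by rw [h1]
      _ ≤ ‖((u⁻¹ : L2opˣ) : L2op)‖ * ‖(1 - lam • T) (f n)‖ :=
          ContinuousLinearMap.le_opNorm _ _
  have hfinal : ∀ᶠ n in atTop, (1 : ℝ) ≤ ‖((u⁻¹ : L2opˣ) : L2op)‖ *
      (‖(1 - xi n • (P n * T)) (f n)‖ +
        c1 * (c1 ^ m * ‖(T - P n * T) * (P n * T) ^ m‖ +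
          2 * ‖T‖ * (Cg * ‖(1 - xi n • (P n * T)) (f n)‖)) +
        ‖xi n - lam‖ * ‖T‖) := by
    filter_upwards [hxib] with n hb
    exact le_trans (hK n) (mul_le_mul_of_nonneg_left (hkey n hb) (norm_nonneg _))
  have hsmall : ∀ᶠ n in atTop, ‖((u⁻¹ : L2opˣ) : L2op)‖ *
      (‖(1 - xi n • (P n * T)) (f n)‖ +
        c1 * (c1 ^ m * ‖(T - P n * T) * (P n * T) ^ m‖ +
          2 * ‖T‖ * (Cg * ‖(1 - xi n • (P n * T)) (f n)‖)) +
        ‖xi n - lam‖ * ‖T‖) < 1 := by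
    have h1 := hbnd0.const_mul ‖((u⁻¹ : L2opˣ) : L2op)‖
    rw [mul_zero] at h1
    exact h1.eventually_lt_const one_pos
  obtain ⟨n, h1, h2⟩ := (hfinal.and hsmall).exists
  linarith
end
end
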